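/- Let K be a field, V a K-vector space, λ ∈ K with λ ≠ 1, and let c : V ⊗ V → V ⊗ V be a K-linear map with (c + id)(c − λ·id) = 0. If a subspace L ⊆ V satisfies c(image of L ⊗ V) ⊆ image of V ⊗ L and c(image of V ⊗ L) ⊆ image of L ⊗ V (inside V ⊗ V), then c maps the image of L ⊗ V into the image of L ⊗ L in V ⊗ V. -/

import Mathlib

open TensorProduct

noncomputable section

variable {K : Type*} [Field K] {V : Type*} [AddCommGroup V] [Module K V]

/-- The endomorphism `c ⊗ id_V` of `V ⊗ (V ⊗ V)` (transported along associativity). -/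
def opC1 (c : V ⊗[K] V →ₗ[K] V ⊗[K] V) :
    V ⊗[K] (V ⊗[K] V) →ₗ[K] V ⊗[K] (V ⊗[K] V) :=
  (TensorProduct.assoc K V V V).toLinearMap ∘ₗ
    LinearMap.rTensor V c ∘ₗ (TensorProduct.assoc K V V V).symm.toLinearMap

/-- The endomorphism `id_V ⊗ c` of `V ⊗ (V ⊗ V)`. -/
def opC2 (c : V ⊗[K] V →ₗ[K] V ⊗[K] V) :
    V ⊗[K] (V ⊗[K] V) →ₗ[K] V ⊗[K] (V ⊗[K] V) :=
  LinearMap.lTensor V c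

/-- The map `b ⊗ id_V : V ⊗ (V ⊗ V) → V ⊗ V`. -/
def opB1 (b : V ⊗[K] V →ₗ[K] V) :
    V ⊗[K] (V ⊗[K] V) →ₗ[K] V ⊗[K] V :=
  LinearMap.rTensor V b ∘ₗ (TensorProduct.assoc K V V V).symm.toLinearMap

/-- The map `id_V ⊗ b : V ⊗ (V ⊗ V) → V ⊗ V`. -/
def opB2 (b : V ⊗[K] V →ₗ[K] V) :
    V ⊗[K] (V ⊗[K] V) →ₗ[K] V ⊗[K] V :=
  LinearMap.lTensor V b

/-- The braid equation `c₁ ∘ c₂ ∘ c₁ = c₂ ∘ c₁ ∘ c₂`. -/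
def BraidEq (c : V ⊗[K] V →ₗ[K] V ⊗[K] V) : Prop :=
  opC1 c ∘ₗ opC2 c ∘ₗ opC1 c = opC2 c ∘ₗ opC1 c ∘ₗ opC2 c

/-- `c` is of Hecke type of mark `lam`: `(c + id) ∘ (c - lam • id) = 0`. -/
def IsHecke (lam : K) (c : V ⊗[K] V →ₗ[K] V ⊗[K] V) : Prop :=
  (c + LinearMap.id) ∘ₗ (c - lam • LinearMap.id) = 0

/-- `b` is a `c`-bracket: `c ∘ b₁ = b₂ ∘ c₁ ∘ c₂` and `c ∘ b₂ = b₁ ∘ c₂ ∘ c₁`. -/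
def IsBracket (c : V ⊗[K] V →ₗ[K] V ⊗[K] V) (b : V ⊗[K] V →ₗ[K] V) : Prop :=
  c ∘ₗ opB1 b = opB2 b ∘ₗ opC1 c ∘ₗ opC2 c ∧
  c ∘ₗ opB2 b = opB1 b ∘ₗ opC2 c ∘ₗ opC1 c

/-- The linear map `V ⊗ V → T(V)`, `v ⊗ w ↦ ι v * ι w`. -/
def tensMul : V ⊗[K] V →ₗ[K] TensorAlgebra K V :=
  LinearMap.mul' K (TensorAlgebra K V) ∘ₗ
    TensorProduct.map (TensorAlgebra.ι K) (TensorAlgebra.ι K)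

/-- The relation on `T(V)` whose associated ring quotient is
`U(V,c,b) = T(V)/(c(z) - lam•z - b(z) : z ∈ V ⊗ V)`. -/
def envRel (lam : K) (c : V ⊗[K] V →ₗ[K] V ⊗[K] V) (b : V ⊗[K] V →ₗ[K] V) :
    TensorAlgebra K V → TensorAlgebra K V → Prop :=
  fun x y => ∃ z : V ⊗[K] V,
    x = tensMul (c z) ∧ y = lam • tensMul z + TensorAlgebra.ι K (b z)

/-- The canonical map `ι_{c,b} : V → U(V,c,b)`. -/
def envIota (lam : K) (c : V ⊗[K] V →ₗ[K] V ⊗[K] V) (b : V ⊗[K] V →ₗ[K] V) :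
    V →ₗ[K] RingQuot (envRel lam c b) :=
  (RingQuot.mkAlgHom K (envRel lam c b)).toLinearMap ∘ₗ TensorAlgebra.ι K

/-- The q-integer `(n)_lam = 1 + lam + ⋯ + lam^(n-1)`. -/
def qInt (lam : K) (n : ℕ) : K := ∑ i ∈ Finset.range n, lam ^ i

/-- The q-factorial `(n)!_lam = (1)_lam (2)_lam ⋯ (n)_lam`. -/
def qFac (lam : K) (n : ℕ) : K := ∏ i ∈ Finset.range n, qInt lam (i + 1)


/-- The image of `L ⊗ V` in `V ⊗ V`: the span of the elements `x ⊗ v` with `x ∈ L`, `v ∈ V`. -/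
def imgLV (L : Submodule K V) : Submodule K (V ⊗[K] V) :=
  Submodule.span K {z | ∃ x ∈ L, ∃ v : V, z = x ⊗ₜ[K] v}

/-- The image of `V ⊗ L` in `V ⊗ V`: the span of the elements `v ⊗ x` with `v ∈ V`, `x ∈ L`. -/
def imgVL (L : Submodule K V) : Submodule K (V ⊗[K] V) :=
  Submodule.span K {z | ∃ v : V, ∃ x ∈ L, z = v ⊗ₜ[K] x}

/-- The image of `L ⊗ L` in `V ⊗ V`: the span of the elements `x ⊗ y` with `x, y ∈ L`. -/
def imgLL (L : Submodule K V) : Submodule K (V ⊗[K] V) :=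
  Submodule.span K {z | ∃ x ∈ L, ∃ y ∈ L, z = x ⊗ₜ[K] y}


lemma mapPP_mem_imgLL (L : Submodule K V) (p : V →ₗ[K] V) (hp : ∀ v, p v ∈ L)
    (z : V ⊗[K] V) : TensorProduct.map p p z ∈ imgLL L := by
  induction z using TensorProduct.induction_on with
  | zero => simp
  | tmul x y =>
    rw [TensorProduct.map_tmul]
    exact Submodule.subset_span ⟨p x, hp x, p y, hp y, rfl⟩
  | add a b ha hb => rw [map_add]; exact (imgLL L).add_mem ha hb

lemma inter_le_imgLL (L : Submodule K V) : imgLV L ⊓ imgVL L ≤ imgLL L := by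
  obtain ⟨W, hW⟩ := Submodule.exists_isCompl L
  set p : V →ₗ[K] V := L.subtype ∘ₗ L.projectionOnto W hW with hp
  have hpL : ∀ x ∈ L, p x = x := by
    intro x hx
    simp [hp, Submodule.projectionOnto_apply_left hW ⟨x, hx⟩]
  have hpV : ∀ v, p v ∈ L := fun v => SetLike.coe_mem _
  have h1 : imgLV L ≤ LinearMap.ker (TensorProduct.map p (LinearMap.id : V →ₗ[K] V) - LinearMap.id) := by
    rw [imgLV, Submodule.span_le]
    rintro _ ⟨x, hx, v, rfl⟩
    simp [LinearMap.mem_ker, TensorProduct.map_tmul, hpL x hx]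
  have h2 : imgVL L ≤ LinearMap.ker (TensorProduct.map (LinearMap.id : V →ₗ[K] V) p - LinearMap.id) := by
    rw [imgVL, Submodule.span_le]
    rintro _ ⟨v, x, hx, rfl⟩
    simp [LinearMap.mem_ker, TensorProduct.map_tmul, hpL x hx]
  rintro z ⟨hz1, hz2⟩
  have e1 : TensorProduct.map p (LinearMap.id : V →ₗ[K] V) z = z := by
    have := h1 hz1
    rw [LinearMap.mem_ker, LinearMap.sub_apply, sub_eq_zero] at this
    simpa using this
  have e2 : TensorProduct.map (LinearMap.id : V →ₗ[K] V) p z = z := by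
    have := h2 hz2
    rw [LinearMap.mem_ker, LinearMap.sub_apply, sub_eq_zero] at this
    simpa using this
  have key : TensorProduct.map p p z = z := by
    have : TensorProduct.map p p = TensorProduct.map (LinearMap.id : V →ₗ[K] V) p ∘ₗ
        TensorProduct.map p (LinearMap.id : V →ₗ[K] V) := by
      rw [← TensorProduct.map_comp]; simp
    rw [this, LinearMap.comp_apply, e1, e2]
  rw [← key]
  exact mapPP_mem_imgLL L p hpV z

/-- If `c` is of Hecke type of mark `lam ≠ 1` and `L` is a categorical subspace of `V`,
then `c` maps the image of `L ⊗ V` into the image of `L ⊗ L` in `V ⊗ V`. -/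
theorem categorical_maps_into_imgLL
    (lam : K) (hlam1 : lam ≠ 1)
    (c : V ⊗[K] V →ₗ[K] V ⊗[K] V) (hHecke : IsHecke lam c)
    (L : Submodule K V)
    (hcat1 : ∀ z ∈ imgLV L, c z ∈ imgVL L)
    (hcat2 : ∀ z ∈ imgVL L, c z ∈ imgLV L) :
    ∀ z ∈ imgLV L, c z ∈ imgLL L := by
  intro z hz
  have hH : ∀ w, c (c w) = (lam - 1) • c w + lam • w := by
    intro w
    have := LinearMap.congr_fun hHecke w
    simp only [LinearMap.comp_apply, LinearMap.add_apply, LinearMap.sub_apply,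
      LinearMap.smul_apply, LinearMap.id_apply, LinearMap.zero_apply, map_sub, map_smul] at this
    linear_combination (norm := module) this
  have h1 := hcat1 z hz
  have h2 := hcat2 _ h1
  rw [hH z] at h2
  have h3 : (lam - 1) • c z ∈ imgLV L := by
    have := (imgLV L).sub_mem h2 ((imgLV L).smul_mem lam hz)
    simpa using this
  have hne : lam - 1 ≠ 0 := sub_ne_zero.mpr hlam1
  have h4 : c z ∈ imgLV L := by
    have := (imgLV L).smul_mem (lam - 1)⁻¹ h3
    rwa [smul_smul, inv_mul_cancel₀ hne, one_smul] at this
  exact inter_le_imgLL L ⟨h4, h1⟩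

end
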